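/- Under the nonlinear fixed-point iteration setup, for all integers n ≥ 0 and i ≥ 0, the second differences satisfy ‖w_{n+i} − F̃ⁱ(F̃ − I)² ε_n‖ ≤ (C_i + 2C_{i+1} + C_{i+2}) ‖ε_n‖². -/

import Mathlib

/-- `C₀ = 0` and `C_i = a·L^{i−1}·(1 − Lⁱ)/(1 − L)` for `i ≥ 1`. -/
noncomputable def Cconst (a L : ℝ) : ℕ → ℝ
  | 0 => 0
  | i + 1 => a * L ^ i * (1 - L ^ (i + 1)) / (1 - L)

/-- Under the nonlinear fixed-point iteration setup, for all `n, i ≥ 0`,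
the second differences `w_m = u_{m+1} − u_m` satisfy
`‖w_{n+i} − F̃ⁱ(F̃ − I)² ε_n‖ ≤ (C_i + 2C_{i+1} + C_{i+2}) ‖ε_n‖²`. -/
theorem rre_second_difference_expansion
    (N : ℕ) (hN : 1 ≤ N) (s : EuclideanSpace ℂ (Fin N)) (δ : ℝ) (hδ : 0 < δ)
    (L a : ℝ) (hL0 : 0 < L) (hL1 : L < 1) (ha : 0 < a)
    (f : EuclideanSpace ℂ (Fin N) → EuclideanSpace ℂ (Fin N)) (hfs : f s = s)
    (hLip : ∀ x y : EuclideanSpace ℂ (Fin N),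
      ‖x - s‖ ≤ δ → ‖y - s‖ ≤ δ → ‖f x - f y‖ ≤ L * ‖x - y‖)
    (F : EuclideanSpace ℂ (Fin N) →L[ℂ] EuclideanSpace ℂ (Fin N)) (hF : ‖F‖ ≤ L)
    (hTay : ∀ x : EuclideanSpace ℂ (Fin N),
      ‖x - s‖ ≤ δ → ‖f x - s - F (x - s)‖ ≤ a * ‖x - s‖ ^ 2)
    (x : ℕ → EuclideanSpace ℂ (Fin N)) (hx0 : ‖x 0 - s‖ ≤ δ)
    (hxit : ∀ m, x (m + 1) = f (x m)) :
    ∀ n i : ℕ,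
      ‖((x (n + i + 2) - x (n + i + 1)) - (x (n + i + 1) - x (n + i)))
          - ((F ^ i * (F - 1) ^ 2 : EuclideanSpace ℂ (Fin N) →L[ℂ] EuclideanSpace ℂ (Fin N))) (x n - s)‖ ≤
        (Cconst a L i + 2 * Cconst a L (i + 1) + Cconst a L (i + 2)) * ‖x n - s‖ ^ 2 := by
  have hL0' : (0:ℝ) ≤ L := le_of_lt hL0
  have hsδ : ‖s - s‖ ≤ δ := by simp [le_of_lt hδ]
  -- all iterates stay in the ball
  have hball : ∀ m, ‖x m - s‖ ≤ δ := by
    intro m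
    induction m with
    | zero => exact hx0
    | succ m ih =>
      have h1 : ‖x (m+1) - s‖ ≤ L * ‖x m - s‖ := by
        rw [hxit m]
        calc ‖f (x m) - s‖ = ‖f (x m) - f s‖ := by rw [hfs]
          _ ≤ L * ‖x m - s‖ := hLip (x m) s ih hsδ
      calc ‖x (m+1) - s‖ ≤ L * ‖x m - s‖ := h1
        _ ≤ 1 * δ := by
            apply mul_le_mul (le_of_lt hL1) ih (norm_nonneg _) zero_le_one
        _ = δ := one_mul δ
  have hstep : ∀ m, ‖x (m+1) - s‖ ≤ L * ‖x m - s‖ := by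
    intro m
    rw [hxit m]
    calc ‖f (x m) - s‖ = ‖f (x m) - f s‖ := by rw [hfs]
      _ ≤ L * ‖x m - s‖ := hLip (x m) s (hball m) hsδ
  have hgeom : ∀ n i, ‖x (n + i) - s‖ ≤ L ^ i * ‖x n - s‖ := by
    intro n i
    induction i with
    | zero => simp
    | succ i ih =>
      calc ‖x (n + (i+1)) - s‖ = ‖x ((n + i) + 1) - s‖ := by ring_nf
        _ ≤ L * ‖x (n + i) - s‖ := hstep _
        _ ≤ L * (L ^ i * ‖x n - s‖) := by
            exact mul_le_mul_of_nonneg_left ih hL0'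
        _ = L ^ (i+1) * ‖x n - s‖ := by ring
  -- recurrence for the constants
  have hCrec : ∀ i, a * L ^ (2 * i) + L * Cconst a L i = Cconst a L (i + 1) := by
    intro i
    cases i with
    | zero =>
      have hne : (1 : ℝ) - L ≠ 0 := by linarith
      show a * L ^ (2*0) + L * Cconst a L 0 = Cconst a L 1
      simp only [Cconst]
      field_simp
      ring
    | succ j =>
      show a * L ^ (2 * (j+1)) + L * (a * L ^ j * (1 - L ^ (j + 1)) / (1 - L))
          = a * L ^ (j+1) * (1 - L ^ (j + 2)) / (1 - L)
      have hne : (1 : ℝ) - L ≠ 0 := by linarith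
      field_simp
      ring
  have hCnonneg : ∀ i, 0 ≤ Cconst a L i := by
    intro i
    cases i with
    | zero => simp [Cconst]
    | succ j =>
      have h1 : (0:ℝ) ≤ 1 - L ^ (j+1) := by
        have : L ^ (j+1) ≤ 1 := pow_le_one₀ hL0' (le_of_lt hL1)
        linarith
      have h2 : (0:ℝ) < 1 - L := by linarith
      exact div_nonneg (mul_nonneg (mul_nonneg (le_of_lt ha) (pow_nonneg hL0' j)) h1)
        (le_of_lt h2)
  -- key estimate: ‖ε_{n+i} - F^i ε_n‖ ≤ C_i ‖ε_n‖²
  have key : ∀ n i, ‖(x (n + i) - s) - (F ^ i) (x n - s)‖ ≤ Cconst a L i * ‖x n - s‖ ^ 2 := by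
    intro n i
    induction i with
    | zero => simp [Cconst]
    | succ i ih =>
      have hFi : (F ^ (i+1)) (x n - s) = F ((F ^ i) (x n - s)) := by
        rw [pow_succ']; rfl
      have hdecomp : (x (n + (i+1)) - s) - (F ^ (i+1)) (x n - s)
          = (f (x (n+i)) - s - F (x (n+i) - s))
            + F ((x (n+i) - s) - (F ^ i) (x n - s)) := by
        rw [hFi]
        have : x (n + (i+1)) = f (x (n+i)) := by
          have := hxit (n + i); rw [← this]; ring_nf
        rw [this, map_sub F (x (n+i) - s) ((F ^ i) (x n - s))]
        abel
      rw [hdecomp]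
      calc ‖(f (x (n+i)) - s - F (x (n+i) - s))
            + F ((x (n+i) - s) - (F ^ i) (x n - s))‖
          ≤ ‖f (x (n+i)) - s - F (x (n+i) - s)‖
            + ‖F ((x (n+i) - s) - (F ^ i) (x n - s))‖ := norm_add_le _ _
        _ ≤ a * ‖x (n+i) - s‖ ^ 2 + L * (Cconst a L i * ‖x n - s‖ ^ 2) := by
            apply add_le_add (hTay _ (hball _))
            calc ‖F ((x (n+i) - s) - (F ^ i) (x n - s))‖
                ≤ ‖F‖ * ‖(x (n+i) - s) - (F ^ i) (x n - s)‖ := F.le_opNorm _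
              _ ≤ L * (Cconst a L i * ‖x n - s‖ ^ 2) := by
                  apply mul_le_mul hF ih (norm_nonneg _) hL0'
        _ ≤ a * (L ^ i * ‖x n - s‖) ^ 2 + L * (Cconst a L i * ‖x n - s‖ ^ 2) := by
            apply add_le_add_left
            apply mul_le_mul_of_nonneg_left _ (le_of_lt ha)
            exact pow_le_pow_left₀ (norm_nonneg _) (hgeom n i) 2
        _ = (a * L ^ (2 * i) + L * Cconst a L i) * ‖x n - s‖ ^ 2 := by ring
        _ = Cconst a L (i+1) * ‖x n - s‖ ^ 2 := by rw [hCrec i]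
  intro n i
  -- operator identity
  have hop : (F ^ i * (F - 1) ^ 2 : EuclideanSpace ℂ (Fin N) →L[ℂ] EuclideanSpace ℂ (Fin N))
      = (F ^ (i+2) - F ^ (i+1)) - (F ^ (i+1) - F ^ i) := by
    simp [pow_succ, mul_sub, sub_mul]
    noncomm_ring
  have hopapp : (F ^ i * (F - 1) ^ 2 : EuclideanSpace ℂ (Fin N) →L[ℂ] EuclideanSpace ℂ (Fin N)) (x n - s)
      = ((F ^ (i+2)) (x n - s) - (F ^ (i+1)) (x n - s))
        - ((F ^ (i+1)) (x n - s) - (F ^ i) (x n - s)) := by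
    rw [hop]; simp
  rw [hopapp]
  have h2 : (x (n + i + 2)) = x (n + (i+2)) := by ring_nf
  have h1 : (x (n + i + 1)) = x (n + (i+1)) := by ring_nf
  rw [h2, h1]
  have hdec : ((x (n + (i+2)) - x (n + (i+1))) - (x (n + (i+1)) - x (n + i)))
      - (((F ^ (i+2)) (x n - s) - (F ^ (i+1)) (x n - s))
        - ((F ^ (i+1)) (x n - s) - (F ^ i) (x n - s)))
      = ((x (n + (i+2)) - s) - (F ^ (i+2)) (x n - s))
        - ((x (n + (i+1)) - s) - (F ^ (i+1)) (x n - s))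
        - (((x (n + (i+1)) - s) - (F ^ (i+1)) (x n - s))
          - ((x (n + i) - s) - (F ^ i) (x n - s))) := by abel
  rw [hdec]
  have T2 := key n (i+2)
  have T1 := key n (i+1)
  have T0 := key n i
  calc ‖((x (n + (i+2)) - s) - (F ^ (i+2)) (x n - s))
        - ((x (n + (i+1)) - s) - (F ^ (i+1)) (x n - s))
        - (((x (n + (i+1)) - s) - (F ^ (i+1)) (x n - s))
          - ((x (n + i) - s) - (F ^ i) (x n - s)))‖
      ≤ ‖((x (n + (i+2)) - s) - (F ^ (i+2)) (x n - s))
        - ((x (n + (i+1)) - s) - (F ^ (i+1)) (x n - s))‖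
        + ‖((x (n + (i+1)) - s) - (F ^ (i+1)) (x n - s))
          - ((x (n + i) - s) - (F ^ i) (x n - s))‖ := norm_sub_le _ _
    _ ≤ (‖(x (n + (i+2)) - s) - (F ^ (i+2)) (x n - s)‖
        + ‖(x (n + (i+1)) - s) - (F ^ (i+1)) (x n - s)‖)
        + (‖(x (n + (i+1)) - s) - (F ^ (i+1)) (x n - s)‖
        + ‖(x (n + i) - s) - (F ^ i) (x n - s)‖) :=
        add_le_add (norm_sub_le _ _) (norm_sub_le _ _)
    _ ≤ (Cconst a L (i+2) * ‖x n - s‖ ^ 2 + Cconst a L (i+1) * ‖x n - s‖ ^ 2)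
        + (Cconst a L (i+1) * ‖x n - s‖ ^ 2 + Cconst a L i * ‖x n - s‖ ^ 2) :=
        add_le_add (add_le_add T2 T1) (add_le_add T1 T0)
    _ = (Cconst a L i + 2 * Cconst a L (i + 1) + Cconst a L (i + 2)) * ‖x n - s‖ ^ 2 := by ring
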